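/- Assume (A1), (A2) and (A3). Then 𝟙 is the unique nonnegative nonzero vector u ∈ ℝ^N solving the algebraic system M u + u = u ∘ (C u), where ∘ denotes the componentwise (Hadamard) product. -/

import Mathlib

open Matrix

open scoped ComplexOrder

lemma aux_psd {N : ℕ} (C : Matrix (Fin N) (Fin N) ℝ) (hC_normal : C * Cᵀ = Cᵀ * C)
    (hC_spec : ∀ μ ∈ spectrum ℂ (C.map (algebraMap ℝ ℂ)), 0 ≤ μ.re) :
    (C + Cᵀ).PosSemidef := by
  set B : Matrix (Fin N) (Fin N) ℝ := C + Cᵀ with hB_def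
  have hB : B.IsHermitian := by
    rw [Matrix.IsHermitian, conjTranspose_eq_transpose_of_trivial]
    simp [hB_def, Matrix.transpose_add]
    abel
  apply (hB.posSemidef_iff_eigenvalues_nonneg.trans Pi.le_def).mpr
  intro k
  set β : ℝ := hB.eigenvalues k with hβ_def
  set v : Fin N → ℝ := ⇑(hB.eigenvectorBasis k) with hv_def
  have hv_eig : B *ᵥ v = β • v := hB.mulVec_eigenvectorBasis k
  have hv_ne : v ≠ 0 := by
    have := (hB.eigenvectorBasis).toBasis.ne_zero k
    simpa [hv_def] using this
  set f : ℝ →+* ℂ := (algebraMap ℝ ℂ) with hf_def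
  set Cc : Matrix (Fin N) (Fin N) ℂ := C.map f with hCc_def
  set Tc : Matrix (Fin N) (Fin N) ℂ := Cᵀ.map f with hTc_def
  have hTc : Tc = Ccᴴ := by
    ext i j
    simp [hTc_def, hCc_def, Matrix.conjTranspose_apply, Matrix.map_apply, hf_def]
  have hnormc : Cc * Tc = Tc * Cc := by
    rw [hCc_def, hTc_def, ← Matrix.map_mul, ← Matrix.map_mul, hC_normal]
  set Bc : Matrix (Fin N) (Fin N) ℂ := Cc + Tc with hBc_def
  have hBCcomm : Bc * Cc = Cc * Bc := by
    rw [hBc_def, add_mul, mul_add, hnormc]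
  set vc : Fin N → ℂ := fun i => (v i : ℂ) with hvc_def
  have hvc_eig : Bc *ᵥ vc = (β : ℂ) • vc := by
    funext i
    have h1 : (Bc *ᵥ vc) i = ((B *ᵥ v) i : ℂ) := by
      simp only [hBc_def, hB_def, hCc_def, hTc_def, Matrix.mulVec, dotProduct,
        Matrix.map_apply, Matrix.add_apply, hvc_def, hf_def, Complex.coe_algebraMap]
      push_cast
      ring
    rw [h1, hv_eig]
    simp [hvc_def]
  set E : Submodule ℂ (Fin N → ℂ) := Module.End.eigenspace (Matrix.mulVecLin Bc) (β : ℂ)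
    with hE_def
  have hvcE : vc ∈ E := by
    rw [hE_def, Module.End.mem_eigenspace_iff, Matrix.mulVecLin_apply, hvc_eig]
  have hvc_ne : vc ≠ 0 := by
    intro h
    apply hv_ne
    funext i
    have := congrFun h i
    simpa [hvc_def] using this
  haveI : Nontrivial E := nontrivial_of_ne ⟨vc, hvcE⟩ 0 (by
    intro h
    exact hvc_ne (by simpa using congrArg Subtype.val h))
  have hinv : ∀ x ∈ E, Matrix.mulVecLin Cc x ∈ E := by
    intro x hx
    rw [hE_def, Module.End.mem_eigenspace_iff] at hx ⊢
    simp only [Matrix.mulVecLin_apply] at hx ⊢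
    rw [Matrix.mulVec_mulVec, hBCcomm, ← Matrix.mulVec_mulVec, hx, Matrix.mulVec_smul]
  set g : E →ₗ[ℂ] E := (Matrix.mulVecLin Cc).restrict hinv with hg_def
  obtain ⟨lam, hlam⟩ := Module.End.exists_eigenvalue g
  obtain ⟨z, hz⟩ := hlam.exists_hasEigenvector
  set w : Fin N → ℂ := (z : Fin N → ℂ) with hw_def
  have hw_ne : w ≠ 0 := fun h => hz.right (Subtype.coe_injective (by simpa [hw_def] using h))
  have hw_eigC : Cc *ᵥ w = lam • w := by
    have h1 : g z = lam • z := hz.apply_eq_smul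
    have h2 := congrArg (Subtype.val) h1
    simpa [hg_def, LinearMap.restrict_apply, Matrix.mulVecLin_apply, hw_def] using h2
  have hw_eigB : Bc *ᵥ w = (β : ℂ) • w := by
    have h := Module.End.mem_eigenspace_iff.mp z.2
    simpa [Matrix.mulVecLin_apply] using h
  have hlam_spec : lam ∈ spectrum ℂ Cc := by
    rw [spectrum.mem_iff]
    intro hunit
    have hker : (algebraMap ℂ (Matrix (Fin N) (Fin N) ℂ) lam - Cc) *ᵥ w = 0 := by
      rw [Matrix.sub_mulVec, Algebra.algebraMap_eq_smul_one, Matrix.smul_mulVec,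
        Matrix.one_mulVec, hw_eigC, sub_self]
    apply hw_ne
    calc w = 1 *ᵥ w := (Matrix.one_mulVec w).symm
    _ = ((↑hunit.unit⁻¹ : Matrix (Fin N) (Fin N) ℂ) * ↑hunit.unit) *ᵥ w := by
          rw [hunit.unit.inv_mul]
    _ = (↑hunit.unit⁻¹ : Matrix (Fin N) (Fin N) ℂ) *ᵥ ((↑hunit.unit
          : Matrix (Fin N) (Fin N) ℂ) *ᵥ w) := (Matrix.mulVec_mulVec _ _ _).symm
    _ = 0 := by rw [IsUnit.unit_spec, hker, Matrix.mulVec_zero]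
  have hre : 0 ≤ lam.re := hC_spec lam hlam_spec
  have hw_eigT : Ccᴴ *ᵥ w = (starRingEnd ℂ lam) • w := by
    set A : Matrix (Fin N) (Fin N) ℂ := Cc - lam • 1 with hA_def
    have hAw : A *ᵥ w = 0 := by
      rw [hA_def, Matrix.sub_mulVec, Matrix.smul_mulVec, Matrix.one_mulVec, hw_eigC,
        sub_self]
    have hAH : Aᴴ = Ccᴴ - (starRingEnd ℂ lam) • 1 := by
      rw [hA_def, Matrix.conjTranspose_sub, Matrix.conjTranspose_smul, Matrix.conjTranspose_one]
      rfl
    have hcc : Cc * Ccᴴ = Ccᴴ * Cc := by rw [← hTc]; exact hnormc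
    have hAnorm : A * Aᴴ = Aᴴ * A := by
      rw [hA_def, hAH]
      simp only [sub_mul, mul_sub, Matrix.smul_mul, Matrix.mul_smul, Matrix.mul_one,
        Matrix.one_mul, smul_smul]
      rw [hcc, mul_comm lam (starRingEnd ℂ lam)]
      abel
    have hz0 : star (Aᴴ *ᵥ w) ⬝ᵥ (Aᴴ *ᵥ w) = 0 := by
      rw [Matrix.star_mulVec, Matrix.conjTranspose_conjTranspose,
        ← Matrix.dotProduct_mulVec, Matrix.mulVec_mulVec, hAnorm, ← Matrix.mulVec_mulVec,
        hAw, Matrix.mulVec_zero, dotProduct_zero]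
    have hA0 : Aᴴ *ᵥ w = 0 := dotProduct_star_self_eq_zero.mp hz0
    rw [hAH, Matrix.sub_mulVec, Matrix.smul_mulVec, Matrix.one_mulVec] at hA0
    exact sub_eq_zero.mp hA0
  -- conclude β = 2 * lam.re
  obtain ⟨i, hi⟩ := Function.ne_iff.mp hw_ne
  have hkey : (β : ℂ) * w i = (lam + starRingEnd ℂ lam) * w i := by
    have h1 : Bc *ᵥ w = (lam + starRingEnd ℂ lam) • w := by
      rw [hBc_def, hTc, Matrix.add_mulVec, hw_eigC, hw_eigT, add_smul]
    have := congrFun (hw_eigB.symm.trans h1) i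
    simpa using this
  have hβeq : (β : ℂ) = lam + starRingEnd ℂ lam := mul_right_cancel₀ (by simpa using hi) hkey
  rw [Complex.add_conj] at hβeq
  have : β = 2 * lam.re := by exact_mod_cast hβeq
  rw [hβ_def] at this ⊢
  rw [this]
  rw [Pi.zero_apply]
  linarith

/-- Irreducibility of a matrix: there is no nonempty proper subset `S` of indices with
`M i j = 0` for all `i ∈ S`, `j ∉ S`. -/
def MatrixIrreducible {N : ℕ} (M : Matrix (Fin N) (Fin N) ℝ) : Prop :=
  ∀ S : Finset (Fin N), S.Nonempty → S ≠ Finset.univ → ∃ i ∈ S, ∃ j ∉ S, M i j ≠ 0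

theorem stmt6 {N : ℕ} (hN : 2 ≤ N)
    (M C : Matrix (Fin N) (Fin N) ℝ)
    -- (A1)
    (hM_offdiag : ∀ i j, i ≠ j → 0 ≤ M i j)
    (hM_irr : MatrixIrreducible M)
    (hM_lss : ∀ i, ∑ j, M i j = ∑ j, M j i)
    (hM_row : ∀ i, ∑ j, M i j = 0)
    -- (A2)
    (hC_pos : ∀ i j, 0 < C i j)
    (hC_normal : C * Cᵀ = Cᵀ * C)
    (hC_row : ∀ i, ∑ j, C i j = 1)
    -- (A3)
    (hC_spec : ∀ μ ∈ spectrum ℂ (C.map (algebraMap ℝ ℂ)), 0 ≤ μ.re)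
    (u : Fin N → ℝ) (hu_nonneg : ∀ i, 0 ≤ u i) (hu_ne : u ≠ 0)
    (hu_eq : ∀ i, M.mulVec u i + u i = u i * C.mulVec u i) :
    ∀ i, u i = 1 := by
  have hNR : (0:ℝ) < N := by
    have : (0:ℕ) < N := by omega
    exact_mod_cast this
  have hone : ∑ (_ : Fin N), (1:ℝ) = N := by simp
  -- Step I: u is strictly positive
  have hu_pos : ∀ i, 0 < u i := by
    by_contra h
    push_neg at h
    obtain ⟨i0, hi0⟩ := h
    have hu0 : u i0 = 0 := le_antisymm hi0 (hu_nonneg i0)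
    set S : Finset (Fin N) := Finset.univ.filter (fun i => u i = 0) with hS
    have hSne : S.Nonempty := ⟨i0, by simp [hS, hu0]⟩
    have hSnu : S ≠ Finset.univ := by
      intro hSu
      apply hu_ne
      funext j
      have : j ∈ S := hSu ▸ Finset.mem_univ j
      simpa [hS] using this
    obtain ⟨i, hiS, j, hjS, hMij⟩ := hM_irr S hSne hSnu
    have hui : u i = 0 := by simpa [hS] using hiS
    have huj : u j ≠ 0 := by simpa [hS] using hjS
    have heq := hu_eq i
    rw [hui] at heq
    simp only [zero_mul, add_zero] at heq
    have hsum : ∑ k, M i k * u k = 0 := by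
      simpa [Matrix.mulVec, dotProduct] using heq
    have hterm : ∀ k ∈ Finset.univ, (0:ℝ) ≤ M i k * u k := by
      intro k _
      rcases eq_or_ne (u k) 0 with h0 | h0
      · simp [h0]
      · have hik : i ≠ k := by rintro rfl; exact h0 hui
        exact mul_nonneg (hM_offdiag i k hik) (hu_nonneg k)
    have hj0 := (Finset.sum_eq_zero_iff_of_nonneg hterm).mp hsum j (Finset.mem_univ j)
    exact hMij ((mul_eq_zero.mp hj0).resolve_right huj)
  -- column sums of M are 0
  have hM_col : ∀ j, ∑ i, M i j = 0 := by
    intro j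
    have := hM_lss j
    rw [hM_row j] at this
    exact this.symm
  -- column sums of C are 1
  have swap3 : ∀ (f : Fin N → Fin N → Fin N → ℝ),
      ∑ j, ∑ i, ∑ k, f i k j = ∑ i, ∑ k, ∑ j, f i k j := by
    intro f
    rw [Finset.sum_comm]
    exact Finset.sum_congr rfl (fun i _ => Finset.sum_comm)
  have hC_col : ∀ j, ∑ i, C i j = 1 := by
    have h1 : ∑ j, ∑ i, C i j = N := by
      rw [Finset.sum_comm]
      simp [hC_row]
    have h2 : ∑ j, (∑ i, C i j)^2 = N := by
      calc ∑ j, (∑ i, C i j)^2 = ∑ j, ∑ i, ∑ k, C i j * C k j := by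
            refine Finset.sum_congr rfl fun j _ => ?_
            rw [sq, Finset.sum_mul_sum]
        _ = ∑ i, ∑ k, ∑ j, C i j * C k j := swap3 _
        _ = ∑ i, ∑ k, (C * Cᵀ) i k := by
            simp [Matrix.mul_apply, Matrix.transpose_apply]
        _ = ∑ i, ∑ k, (Cᵀ * C) i k := by rw [hC_normal]
        _ = ∑ i, ∑ k, ∑ j, C j i * C j k := by
            simp [Matrix.mul_apply, Matrix.transpose_apply]
        _ = ∑ j, ∑ i, ∑ k, C j i * C j k := (swap3 _).symm
        _ = ∑ j, (∑ i, C j i) * (∑ k, C j k) := by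
            refine Finset.sum_congr rfl fun j _ => ?_
            rw [Finset.sum_mul_sum]
        _ = N := by simp [hC_row]
    have h3 : ∑ j, (∑ i, C i j - 1)^2 = 0 := by
      have e : ∀ j : Fin N, (∑ i, C i j - 1)^2
          = (∑ i, C i j)^2 - 2*(∑ i, C i j) + 1 := fun j => by ring
      rw [Finset.sum_congr rfl (fun j _ => e j), Finset.sum_add_distrib,
        Finset.sum_sub_distrib, ← Finset.mul_sum, h1, h2, hone]
      ring
    intro j
    have := (Finset.sum_eq_zero_iff_of_nonneg (fun j _ => sq_nonneg _)).mp h3 j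
      (Finset.mem_univ j)
    have := sq_eq_zero_iff.mp this
    linarith
  set s : ℝ := ∑ i, u i with hs_def
  have hs_pos : 0 < s := by
    refine Finset.sum_pos (fun i _ => hu_pos i) ?_
    exact ⟨⟨0, by omega⟩, Finset.mem_univ _⟩
  -- sum of equations
  have hMu : ∑ i, M.mulVec u i = 0 := by
    simp only [Matrix.mulVec, dotProduct]
    rw [Finset.sum_comm]
    refine Finset.sum_eq_zero fun j _ => ?_
    rw [← Finset.sum_mul, hM_col j, zero_mul]
  have hsum_eq : ∑ i, u i * C.mulVec u i = s := by
    calc ∑ i, u i * C.mulVec u i = ∑ i, (M.mulVec u i + u i) :=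
          (Finset.sum_congr rfl fun i _ => (hu_eq i).symm)
      _ = (∑ i, M.mulVec u i) + s := Finset.sum_add_distrib
      _ = s := by rw [hMu, zero_add]
  have hCu_sum : ∑ i, C.mulVec u i = s := by
    simp only [Matrix.mulVec, dotProduct]
    rw [Finset.sum_comm]
    refine Finset.sum_congr rfl fun j _ => ?_
    rw [← Finset.sum_mul, hC_col j, one_mul]
  -- EHRS inequality
  set L : Fin N → ℝ := fun i => Real.log (u i) with hL_def
  have key_pt : ∀ i j, M i j * (1 + L j - L i) ≤ M i j * (u j / u i) := by
    intro i j
    rcases eq_or_ne i j with rfl | hij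
    · apply le_of_eq
      rw [div_self (hu_pos i).ne']
      ring
    · apply mul_le_mul_of_nonneg_left _ (hM_offdiag i j hij)
      have h1 : (L j - L i) + 1 ≤ Real.exp (L j - L i) := Real.add_one_le_exp _
      have h2 : Real.exp (L j - L i) = u j / u i := by
        rw [hL_def, Real.exp_sub, Real.exp_log (hu_pos j), Real.exp_log (hu_pos i)]
      linarith
  have hLHS : ∑ i, ∑ j, M i j * (1 + L j - L i) = 0 := by
    have e1 : ∀ i, ∑ j, M i j * (1 + L j - L i) = ∑ j, M i j * L j := by
      intro i
      have : ∀ j, M i j * (1 + L j - L i) = M i j + M i j * L j - M i j * L i := fun j => by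
        ring
      rw [Finset.sum_congr rfl (fun j _ => this j), Finset.sum_sub_distrib,
        Finset.sum_add_distrib, ← Finset.sum_mul, hM_row i]
      simp
    rw [Finset.sum_congr rfl (fun i _ => e1 i), Finset.sum_comm]
    refine Finset.sum_eq_zero fun j _ => ?_
    rw [← Finset.sum_mul, hM_col j, zero_mul]
  have hRHS : ∑ i, ∑ j, M i j * (u j / u i) = s - N := by
    have hterm : ∀ i, ∑ j, M i j * (u j / u i) = C.mulVec u i - 1 := by
      intro i
      have hMui : M.mulVec u i = u i * C.mulVec u i - u i := by
        have := hu_eq i; linarith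
      have e1 : ∑ j, M i j * (u j / u i) = (∑ j, M i j * u j) / u i := by
        rw [Finset.sum_div]
        exact Finset.sum_congr rfl fun j _ => (mul_div_assoc _ _ _).symm
      have e2 : (∑ j, M i j * u j) = M.mulVec u i := rfl
      rw [e1, e2, hMui]
      field_simp [(hu_pos i).ne']
    rw [Finset.sum_congr rfl (fun i _ => hterm i), Finset.sum_sub_distrib, hCu_sum, hone]
  have hsge : (N:ℝ) ≤ s := by
    have h := Finset.sum_le_sum (fun i (_ : i ∈ Finset.univ) =>
      Finset.sum_le_sum (fun j (_ : j ∈ Finset.univ) => key_pt i j))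
    rw [hLHS, hRHS] at h
    linarith
  -- upper bound via positive semidefiniteness
  set a : ℝ := s / N with ha_def
  set w : Fin N → ℝ := fun i => u i - a with hw_def
  have hw_sum : ∑ i, w i = 0 := by
    simp only [hw_def]
    rw [Finset.sum_sub_distrib, ← hs_def, Finset.sum_const, Finset.card_univ,
      Fintype.card_fin, nsmul_eq_mul, ha_def]
    field_simp
    simp
  have hwCw : 0 ≤ ∑ i, ∑ j, w i * C i j * w j := by
    have hpsd := PosSemidef.dotProduct_mulVec_nonneg (aux_psd C hC_normal hC_spec) w
    have hsymm : ∑ i, ∑ j, w i * C j i * w j = ∑ i, ∑ j, w i * C i j * w j := by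
      rw [Finset.sum_comm]
      exact Finset.sum_congr rfl fun i _ => Finset.sum_congr rfl fun j _ => by ring
    have hdp : star w ⬝ᵥ (C + Cᵀ) *ᵥ w
        = (∑ i, ∑ j, w i * C i j * w j) + ∑ i, ∑ j, w i * C j i * w j := by
      simp only [dotProduct, Matrix.mulVec, Matrix.add_apply, Matrix.transpose_apply,
        Pi.star_apply, star_trivial]
      rw [← Finset.sum_add_distrib]
      refine Finset.sum_congr rfl fun i _ => ?_
      rw [Finset.mul_sum, ← Finset.sum_add_distrib]
      exact Finset.sum_congr rfl fun j _ => by ring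
    rw [hdp, hsymm] at hpsd
    linarith
  have hquad : ∑ i, ∑ j, u i * C i j * u j = s := by
    rw [← hsum_eq]
    refine Finset.sum_congr rfl fun i _ => ?_
    rw [Matrix.mulVec, dotProduct, Finset.mul_sum]
    exact Finset.sum_congr rfl fun j _ => by ring
  have t1 : ∑ i, ∑ j, C i j * w j = 0 := by
    rw [Finset.sum_comm]
    calc ∑ j, ∑ i, C i j * w j = ∑ j, w j := by
          refine Finset.sum_congr rfl fun j _ => ?_
          rw [← Finset.sum_mul, hC_col j, one_mul]
      _ = 0 := hw_sum
  have t2 : ∑ i, ∑ j, w i * C i j = 0 := by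
    calc ∑ i, ∑ j, w i * C i j = ∑ i, w i := by
          refine Finset.sum_congr rfl fun i _ => ?_
          rw [← Finset.mul_sum, hC_row i, mul_one]
      _ = 0 := hw_sum
  have t3 : ∑ i, ∑ j, C i j = (N:ℝ) := by
    rw [Finset.sum_congr rfl (fun i (_ : i ∈ Finset.univ) => hC_row i), hone]
  have hexpand : s = (∑ i, ∑ j, w i * C i j * w j) + a^2 * N := by
    have e0 : ∀ i j, u i * C i j * u j
        = w i * C i j * w j + a * (C i j * w j) + a * (w i * C i j) + a^2 * C i j := by
      intro i j
      have hwi : u i = w i + a := by simp [hw_def]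
      have hwj : u j = w j + a := by simp [hw_def]
      rw [hwi, hwj]
      ring
    calc s = ∑ i, ∑ j, u i * C i j * u j := hquad.symm
      _ = ∑ i, ∑ j, (w i * C i j * w j + a * (C i j * w j) + a * (w i * C i j)
            + a^2 * C i j) := by
          exact Finset.sum_congr rfl fun i _ => Finset.sum_congr rfl fun j _ => e0 i j
      _ = (∑ i, ∑ j, w i * C i j * w j) + a * (∑ i, ∑ j, C i j * w j)
            + a * (∑ i, ∑ j, w i * C i j) + a^2 * (∑ i, ∑ j, C i j) := by
          simp only [Finset.sum_add_distrib, ← Finset.mul_sum]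
      _ = (∑ i, ∑ j, w i * C i j * w j) + a^2 * N := by
          rw [t1, t2, t3]
          ring
  have hsle : s ≤ (N:ℝ) := by
    have ha2 : a^2 * N = s^2 / N := by
      rw [ha_def]
      field_simp
    rw [ha2] at hexpand
    have h5 : s^2 / N ≤ s := by linarith
    rw [div_le_iff₀ hNR] at h5
    nlinarith
  have hsN : s = (N:ℝ) := le_antisymm hsle hsge
  -- equality case: pointwise equality in the EHRS bound
  have hpt : ∀ i j, M i j * (1 + L j - L i) = M i j * (u j / u i) := by
    have hle : ∀ p ∈ (Finset.univ : Finset (Fin N × Fin N)),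
        M p.1 p.2 * (1 + L p.2 - L p.1) ≤ M p.1 p.2 * (u p.2 / u p.1) :=
      fun p _ => key_pt p.1 p.2
    have hsum : ∑ p : Fin N × Fin N, M p.1 p.2 * (1 + L p.2 - L p.1)
        = ∑ p : Fin N × Fin N, M p.1 p.2 * (u p.2 / u p.1) := by
      rw [Fintype.sum_prod_type, Fintype.sum_prod_type, hLHS, hRHS, hsN]
      ring
    intro i j
    exact (Finset.sum_eq_sum_iff_of_le hle).mp hsum (i, j) (Finset.mem_univ _)
  have hconst : ∀ i j, M i j ≠ 0 → u i = u j := by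
    intro i j hMij
    rcases eq_or_ne i j with rfl | hij
    · rfl
    · have h2 : 1 + L j - L i = u j / u i := mul_left_cancel₀ hMij (hpt i j)
      have hexp : Real.exp (L j - L i) = u j / u i := by
        rw [hL_def]
        rw [Real.exp_sub, Real.exp_log (hu_pos j), Real.exp_log (hu_pos i)]
      rcases eq_or_ne (L j - L i) 0 with h0 | h0
      · have hLL : L i = L j := by linarith
        calc u i = Real.exp (L i) := (Real.exp_log (hu_pos i)).symm
          _ = Real.exp (L j) := by rw [hLL]
          _ = u j := Real.exp_log (hu_pos j)
      · exfalso
        have hstrict : (L j - L i) + 1 < Real.exp (L j - L i) := Real.add_one_lt_exp h0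
        rw [hexp] at hstrict
        linarith
  -- u is constant
  set i0 : Fin N := ⟨0, by omega⟩ with hi0_def
  have hcc : ∀ j, u j = u i0 := by
    set S : Finset (Fin N) := Finset.univ.filter (fun j => u j = u i0) with hS
    have hSuniv : S = Finset.univ := by
      by_contra hne
      obtain ⟨i, hiS, j, hjS, hMij⟩ := hM_irr S ⟨i0, by simp [hS]⟩ hne
      apply hjS
      have hui : u i = u i0 := by simpa [hS] using hiS
      have : u j = u i0 := by rw [← (hconst i j hMij), hui]
      simp [hS, this]
    intro j
    have : j ∈ S := hSuniv ▸ Finset.mem_univ j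
    simpa [hS] using this
  have hval : (N:ℝ) * u i0 = N := by
    have : s = (N:ℝ) * u i0 := by
      rw [hs_def, Finset.sum_congr rfl (fun j (_ : j ∈ Finset.univ) => hcc j),
        Finset.sum_const, Finset.card_univ, Fintype.card_fin, nsmul_eq_mul]
    rw [← this, hsN]
  have hone' : u i0 = 1 := by
    have hNne : (N:ℝ) ≠ 0 := ne_of_gt hNR
    field_simp at hval
    tauto
  intro i
  rw [hcc i, hone']
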